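/- Let S : [0,T] → ℝ be continuous, (π^n) the dyadic Lebesgue partitions generated by S, and for u ∈ ℝ and t ∈ [0,T] set L_t^{π^n}(u) = ∑_j 1_{⦇S(τ_j^n∧t), S(τ_{j+1}^n∧t)⦈}(u)|S(τ_{j+1}^n∧t) − u|. Then for every dyadic point u = k2^{−n}, L_t^{π^n}(u) = 2^{−n} D_t(u − 2^{−n}, u) + ε, where D_t(a,b) is the number of downcrossings of [a,b] by S on [0,t] and ε ∈ [0, 2^{−n}]. -/
import Mathlib


open Set Classical

/-- The dyadic grid `2^{-n}ℤ`. -/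
def dyadicGrid (n : ℕ) : Set ℝ := {x | ∃ m : ℤ, x = (m : ℝ) * 2 ^ (-(n : ℝ))}

/-- `⦇a,b⦈` : the half-open interval `(a,b]` if `a ≤ b`, and `(b,a]` otherwise. -/
noncomputable def hook (a b : ℝ) : Set ℝ := if a ≤ b then Set.Ioc a b else Set.Ioc b a

/-- The discrete local time of a path `S` along the partition `τ` at time `t` and level `u`. -/
noncomputable def discreteLocalTime (S : ℝ → ℝ) (τ : ℕ → ℝ) (t u : ℝ) : ℝ :=
  ∑' j : ℕ, if u ∈ hook (S (min (τ j) t)) (S (min (τ (j + 1)) t))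
            then |S (min (τ (j + 1)) t) - u| else 0

/-- The set of downcrossing pairs of `[a,b]` by `S` during `[0,t]`. -/
def downcrossingPairs (S : ℝ → ℝ) (t a b : ℝ) : Set (ℝ × ℝ) :=
  {p | p.1 ∈ Set.Icc 0 t ∧ p.2 ∈ Set.Icc 0 t ∧ p.1 < p.2 ∧
    S p.1 = b ∧ S p.2 = a ∧ ∀ w ∈ Set.Ioo p.1 p.2, S w ∈ Set.Ioo a b}

namespace DLT

noncomputable def gstep (n : ℕ) : ℝ := (2:ℝ) ^ (-(n : ℝ))

lemma gstep_pos (n : ℕ) : 0 < gstep n := Real.rpow_pos_of_pos two_pos _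

lemma mem_grid_iff {n : ℕ} {x : ℝ} : x ∈ dyadicGrid n ↔ ∃ m : ℤ, x = (m : ℝ) * gstep n :=
  Iff.rfl

lemma grid_add {n : ℕ} {x : ℝ} (hx : x ∈ dyadicGrid n) : x + gstep n ∈ dyadicGrid n := by
  obtain ⟨m, rfl⟩ := hx
  exact ⟨m + 1, by push_cast [gstep]; ring⟩

lemma grid_sub {n : ℕ} {x : ℝ} (hx : x ∈ dyadicGrid n) : x - gstep n ∈ dyadicGrid n := by
  obtain ⟨m, rfl⟩ := hx
  exact ⟨m - 1, by push_cast [gstep]; ring⟩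

lemma grid_dist {n : ℕ} {x y : ℝ} (hx : x ∈ dyadicGrid n) (hy : y ∈ dyadicGrid n)
    (hxy : x ≠ y) : gstep n ≤ |x - y| := by
  obtain ⟨m1, rfl⟩ := hx
  obtain ⟨m2, rfl⟩ := hy
  have hm : m1 ≠ m2 := by rintro rfl; exact hxy rfl
  have h1 : (1 : ℝ) ≤ |(m1 : ℝ) - (m2 : ℝ)| := by
    have h := Int.one_le_abs (sub_ne_zero.mpr hm)
    have : ((1:ℤ):ℝ) ≤ ((|m1 - m2| : ℤ) : ℝ) := by exact_mod_cast h
    rwa [Int.cast_abs, Int.cast_one, Int.cast_sub] at this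
  have hpos := gstep_pos n
  calc gstep n = 1 * gstep n := (one_mul _).symm
    _ ≤ |(m1:ℝ) - m2| * gstep n := by nlinarith
    _ = |(m1:ℝ) * gstep n - m2 * gstep n| := by
        rw [← sub_mul, abs_mul, abs_of_pos hpos]

lemma grid_step_up {n : ℕ} {x y : ℝ} (hx : x ∈ dyadicGrid n) (hy : y ∈ dyadicGrid n)
    (h1 : x < y) (h2 : y ≤ x + gstep n) : y = x + gstep n := by
  by_contra hne
  have := grid_dist (grid_add hx) hy (fun h => hne h.symm)
  have := grid_dist hx hy h1.ne
  have h3 : gstep n ≤ y - x := by rwa [abs_sub_comm, abs_of_pos (by linarith)] at this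
  have h4 : y = x + gstep n := by linarith
  exact hne h4

lemma grid_step_down {n : ℕ} {x y : ℝ} (hx : x ∈ dyadicGrid n) (hy : y ∈ dyadicGrid n)
    (h1 : y < x) (h2 : x - gstep n ≤ y) : y = x - gstep n := by
  have := grid_step_up hy hx h1 (by linarith)
  linarith

lemma grid_closed (n : ℕ) : IsClosed (dyadicGrid n) := by
  have : dyadicGrid n = (fun x : ℝ => x * gstep n) '' (Set.range ((↑) : ℤ → ℝ)) := by
    ext x
    constructor
    · rintro ⟨m, rfl⟩; exact ⟨m, ⟨m, rfl⟩, rfl⟩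
    · rintro ⟨y, ⟨m, rfl⟩, rfl⟩; exact ⟨m, rfl⟩
  rw [this]
  have hne : (gstep n) ≠ 0 := (gstep_pos n).ne'
  exact (Homeomorph.mulRight₀ _ hne).isClosedMap _ Int.isClosedEmbedding_coe_real.isClosed_range

lemma hook_eq (a b : ℝ) : hook a b = Set.Ioc (min a b) (max a b) := by
  unfold hook
  split
  · rw [min_eq_left ‹a ≤ b›, max_eq_right ‹a ≤ b›]
  · have h : b ≤ a := le_of_not_ge ‹¬ a ≤ b›
    rw [min_eq_right h, max_eq_left h]

section
variable {S : ℝ → ℝ} {n : ℕ} {τ : ℕ → ℝ}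

def hitSet (S : ℝ → ℝ) (n : ℕ) (τ : ℕ → ℝ) (j : ℕ) : Set ℝ :=
  {s : ℝ | τ j ≤ s ∧ S s ∈ dyadicGrid n ∧ S s ≠ S (τ j)}

theorem tau_succ_mem (hS : Continuous S)
    (hne : ∀ j, (hitSet S n τ j).Nonempty)
    (hτ : ∀ j, τ (j + 1) = sInf (hitSet S n τ j)) (j : ℕ) :
    τ j ≤ τ (j+1) ∧ S (τ (j+1)) ∈ dyadicGrid n ∧ S (τ (j+1)) ≠ S (τ j) := by
  have hbdd : BddBelow (hitSet S n τ j) := ⟨τ j, fun s hs => hs.1⟩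
  have hA := hne j
  set c := sInf (hitSet S n τ j) with hc
  have hle : τ j ≤ c := le_csInf hA (fun s hs => hs.1)
  have hB : IsClosed {s : ℝ | τ j ≤ s ∧ S s ∈ dyadicGrid n} := by
    have h1 : IsClosed {s : ℝ | τ j ≤ s} := isClosed_le continuous_const continuous_id
    have h2 : IsClosed (S ⁻¹' dyadicGrid n) := (grid_closed n).preimage hS
    exact h1.inter h2
  have hsub : hitSet S n τ j ⊆ {s : ℝ | τ j ≤ s ∧ S s ∈ dyadicGrid n} :=
    fun s hs => ⟨hs.1, hs.2.1⟩
  have hmem : c ∈ closure (hitSet S n τ j) := csInf_mem_closure hA hbdd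
  have h1 : τ j ≤ c ∧ S c ∈ dyadicGrid n := closure_minimal hsub hB hmem
  have h2 : S c ≠ S (τ j) := by
    intro heq
    obtain ⟨δ, hδ, hcont⟩ := Metric.continuous_iff.mp hS c (gstep n) (gstep_pos n)
    have hlt : c < c + δ := by linarith
    obtain ⟨s, hsA, hs⟩ := (csInf_lt_iff hbdd hA).mp (hc ▸ hlt)
    have hcs : c ≤ s := csInf_le hbdd hsA
    have hdist : dist s c < δ := by
      rw [Real.dist_eq, abs_of_nonneg (by linarith)]; linarith
    have := hcont s hdist
    rw [Real.dist_eq] at this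
    have hge := grid_dist hsA.2.1 h1.2 (heq ▸ hsA.2.2)
    rw [abs_sub_comm] at hge
    linarith [abs_sub_comm (S s) (S c) ▸ hge]
  rw [hτ j]
  exact ⟨hle, h1.2, h2⟩

theorem notMem_between
    (hτ : ∀ j, τ (j + 1) = sInf (hitSet S n τ j)) (j : ℕ) {s : ℝ}
    (h1 : τ j ≤ s) (h2 : s < τ (j+1)) (hg : S s ∈ dyadicGrid n) : S s = S (τ j) := by
  by_contra hne'
  have : s ∈ hitSet S n τ j := ⟨h1, hg, hne'⟩
  have : τ (j+1) ≤ s := (hτ j) ▸ csInf_le ⟨τ j, fun x hx => hx.1⟩ this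
  linarith

theorem tau_mono (hS : Continuous S)
    (hne : ∀ j, (hitSet S n τ j).Nonempty)
    (hτ : ∀ j, τ (j + 1) = sInf (hitSet S n τ j)) : StrictMono τ := by
  apply strictMono_nat_of_lt_succ
  intro j
  obtain ⟨h1, _, h3⟩ := tau_succ_mem hS hne hτ j
  rcases h1.lt_or_eq with h | h
  · exact h
  · exact absurd (congrArg S h).symm h3

/-- confinement: before the next hitting time, the path stays within `gstep` of a grid start -/
theorem confin (hS : Continuous S)
    (hτ : ∀ j, τ (j + 1) = sInf (hitSet S n τ j)) (j : ℕ)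
    (hg : S (τ j) ∈ dyadicGrid n) {s : ℝ} (h1 : τ j ≤ s) (h2 : s < τ (j+1)) :
    |S s - S (τ j)| < gstep n := by
  rw [abs_lt]
  constructor
  · by_contra hcon
    push_neg at hcon
    have hmem : S (τ j) - gstep n ∈ Icc (S s) (S (τ j)) :=
      ⟨by linarith, by linarith [gstep_pos n]⟩
    obtain ⟨w, hw, hSw⟩ := intermediate_value_Icc' h1 hS.continuousOn hmem
    have hgw : S w ∈ dyadicGrid n := hSw ▸ grid_sub hg
    have hne' : S w ≠ S (τ j) := by rw [hSw]; linarith [gstep_pos n]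
    exact hne' (notMem_between hτ j hw.1 (lt_of_le_of_lt hw.2 h2) hgw)
  · by_contra hcon
    push_neg at hcon
    have hmem : S (τ j) + gstep n ∈ Icc (S (τ j)) (S s) :=
      ⟨by linarith [gstep_pos n], by linarith⟩
    obtain ⟨w, hw, hSw⟩ := intermediate_value_Icc h1 hS.continuousOn hmem
    have hgw : S w ∈ dyadicGrid n := hSw ▸ grid_add hg
    have hne' : S w ≠ S (τ j) := by rw [hSw]; linarith [gstep_pos n]
    exact hne' (notMem_between hτ j hw.1 (lt_of_le_of_lt hw.2 h2) hgw)

/-- each step from a grid point moves exactly one grid unit -/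
theorem step_eq (hS : Continuous S)
    (hne : ∀ j, (hitSet S n τ j).Nonempty)
    (hτ : ∀ j, τ (j + 1) = sInf (hitSet S n τ j)) (j : ℕ)
    (hg : S (τ j) ∈ dyadicGrid n) :
    S (τ (j+1)) = S (τ j) + gstep n ∨ S (τ (j+1)) = S (τ j) - gstep n := by
  obtain ⟨h1, hg2, h3⟩ := tau_succ_mem hS hne hτ j
  have hub : S (τ (j+1)) ≤ S (τ j) + gstep n := by
    by_contra hcon
    push_neg at hcon
    have hmem : S (τ j) + gstep n ∈ Icc (S (τ j)) (S (τ (j+1))) :=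
      ⟨by linarith [gstep_pos n], le_of_lt hcon⟩
    obtain ⟨w, hw, hSw⟩ := intermediate_value_Icc h1 hS.continuousOn hmem
    have hwlt : w < τ (j+1) := by
      rcases hw.2.lt_or_eq with h | h
      · exact h
      · exfalso; rw [h] at hSw; rw [hSw] at hcon; linarith
    have hgw : S w ∈ dyadicGrid n := hSw ▸ grid_add hg
    have : S w = S (τ j) := notMem_between hτ j hw.1 hwlt hgw
    rw [hSw] at this; linarith [gstep_pos n]
  have hlb : S (τ j) - gstep n ≤ S (τ (j+1)) := by
    by_contra hcon
    push_neg at hcon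
    have hmem : S (τ j) - gstep n ∈ Icc (S (τ (j+1))) (S (τ j)) :=
      ⟨le_of_lt hcon, by linarith [gstep_pos n]⟩
    obtain ⟨w, hw, hSw⟩ := intermediate_value_Icc' h1 hS.continuousOn hmem
    have hwlt : w < τ (j+1) := by
      rcases hw.2.lt_or_eq with h | h
      · exact h
      · exfalso; rw [h] at hSw; rw [hSw] at hcon; linarith
    have hgw : S w ∈ dyadicGrid n := hSw ▸ grid_sub hg
    have : S w = S (τ j) := notMem_between hτ j hw.1 hwlt hgw
    rw [hSw] at this; linarith [gstep_pos n]
  rcases lt_trichotomy (S (τ (j+1))) (S (τ j)) with h | h | h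
  · exact Or.inr (grid_step_down hg hg2 h hlb)
  · exact absurd h h3
  · exact Or.inl (grid_step_up hg hg2 h hub)

theorem tau_unbounded (hS : Continuous S)
    (hne : ∀ j, (hitSet S n τ j).Nonempty)
    (hτ : ∀ j, τ (j + 1) = sInf (hitSet S n τ j)) (M : ℝ) : ∃ N, M < τ N := by
  by_contra hcon
  push_neg at hcon
  have hmono : Monotone τ := (tau_mono hS hne hτ).monotone
  have hbdd : BddAbove (Set.range τ) := ⟨M, by rintro x ⟨N, rfl⟩; exact hcon N⟩
  have htend : Filter.Tendsto τ Filter.atTop (nhds (⨆ j, τ j)) := tendsto_atTop_ciSup hmono hbdd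
  have hc : CauchySeq (S ∘ τ) := ((hS.tendsto _).comp htend).cauchySeq
  obtain ⟨N, hN⟩ := Metric.cauchySeq_iff.mp hc (gstep n) (gstep_pos n)
  have hgrid : S (τ (N+1)) ∈ dyadicGrid n := (tau_succ_mem hS hne hτ N).2.1
  have := hN (N+2) (by omega) (N+1) (by omega)
  simp only [Function.comp_apply, Real.dist_eq] at this
  have habs : |S (τ (N+1+1)) - S (τ (N+1))| = gstep n := by
    rcases step_eq hS hne hτ (N+1) hgrid with h | h
    · rw [h, add_sub_cancel_left, abs_of_pos (gstep_pos n)]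
    · rw [h, sub_sub_cancel_left, abs_neg, abs_of_pos (gstep_pos n)]
  rw [habs] at this
  exact lt_irrefl _ this

theorem exists_between_mono {τ : ℕ → ℝ} {t : ℝ} {N : ℕ}
    (h0 : τ 0 ≤ t) (hN : t < τ N) : ∃ j, τ j ≤ t ∧ t < τ (j+1) := by
  induction N with
  | zero => exact absurd hN (not_lt.mpr h0)
  | succ m ih =>
    by_cases h : t < τ m
    · exact ih h
    · exact ⟨m, le_of_not_gt h, hN⟩

theorem exists_between_mono' {τ : ℕ → ℝ} {y : ℝ} {N : ℕ}
    (h0 : τ 0 < y) (hN : y ≤ τ N) : ∃ j, τ j < y ∧ y ≤ τ (j+1) := by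
  induction N with
  | zero => exact absurd hN (not_le.mpr h0)
  | succ m ih =>
    by_cases h : y ≤ τ m
    · exact ih h
    · exact ⟨m, not_le.mp h, hN⟩

end
end DLT

/-- At a dyadic level `u = k2^{-n}`, the discrete local time along the level-`n` dyadic
Lebesgue partition equals `2^{-n}` times the number of downcrossings of
`[u - 2^{-n}, u]`, up to an error `ε ∈ [0, 2^{-n}]`. -/
theorem discreteLocalTime_eq_downcrossings
    (S : ℝ → ℝ) (hS : Continuous S) (n : ℕ) (T : ℝ) (hT : 0 < T)
    (τ : ℕ → ℝ) (hτ0 : τ 0 = 0)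
    (hne : ∀ j, {s : ℝ | τ j ≤ s ∧ S s ∈ dyadicGrid n ∧ S s ≠ S (τ j)}.Nonempty)
    (hτ : ∀ j, τ (j + 1) = sInf {s : ℝ | τ j ≤ s ∧ S s ∈ dyadicGrid n ∧ S s ≠ S (τ j)})
    (k : ℤ) (t : ℝ) (ht : t ∈ Set.Icc 0 T)
    (hD : (downcrossingPairs S t (((k : ℝ) - 1) * 2 ^ (-(n : ℝ))) ((k : ℝ) * 2 ^ (-(n : ℝ)))).Finite) :
    ∃ ε ∈ Set.Icc (0 : ℝ) (2 ^ (-(n : ℝ))),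
      discreteLocalTime S τ t ((k : ℝ) * 2 ^ (-(n : ℝ)))
        = 2 ^ (-(n : ℝ)) *
            (downcrossingPairs S t (((k : ℝ) - 1) * 2 ^ (-(n : ℝ))) ((k : ℝ) * 2 ^ (-(n : ℝ)))).ncard
          + ε := by
  classical
  clear hD hT
  have hne' : ∀ j, (DLT.hitSet S n τ j).Nonempty := hne
  have hτ' : ∀ j, τ (j + 1) = sInf (DLT.hitSet S n τ j) := hτ
  clear hne hτ
  set g : ℝ := DLT.gstep n with hg_def
  have hgpos : 0 < g := DLT.gstep_pos n
  set u : ℝ := (k : ℝ) * 2 ^ (-(n : ℝ)) with hu_def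
  have hu : u ∈ dyadicGrid n := ⟨k, rfl⟩
  have hau : ((k : ℝ) - 1) * 2 ^ (-(n : ℝ)) = u - g := by
    rw [hu_def, hg_def, DLT.gstep]; ring
  have hg2 : (2 : ℝ) ^ (-(n : ℝ)) = g := rfl
  rw [hau, hg2]
  have hua : u - g ∈ dyadicGrid n := DLT.grid_sub hu
  have smono : StrictMono τ := DLT.tau_mono hS hne' hτ'
  have mono : Monotone τ := smono.monotone
  have htau0 : ∀ j, 0 ≤ τ j := fun j => hτ0 ▸ mono (Nat.zero_le j)
  have hstep := fun j => DLT.tau_succ_mem hS hne' hτ' j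
  have ht0 : 0 ≤ t := ht.1
  obtain ⟨N, hNt⟩ := DLT.tau_unbounded hS hne' hτ' t
  set f : ℕ → ℝ := fun j =>
    if u ∈ hook (S (min (τ j) t)) (S (min (τ (j + 1)) t))
    then |S (min (τ (j + 1)) t) - u| else 0 with hf_def
  -- vanishing beyond t
  have hzero : ∀ j, t < τ j → f j = 0 := by
    intro j hj
    have h1 : min (τ j) t = t := min_eq_right hj.le
    have h2 : min (τ (j+1)) t = t := min_eq_right ((hj.trans_le (hstep j).1)).le
    simp only [hf_def, h1, h2, DLT.hook_eq, min_self, max_self]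
    rw [if_neg (by simp)]
  -- the tsum is a finite sum
  have hDLT : discreteLocalTime S τ t u = ∑ j ∈ Finset.range N, f j := by
    rw [discreteLocalTime]
    exact tsum_eq_sum (fun j hj =>
      hzero j (lt_of_lt_of_le hNt (mono (le_of_not_gt (fun h => hj (Finset.mem_range.mpr h))))))
  -- classification of completed steps
  have key1 : ∀ j, τ (j+1) ≤ t →
      f j = if S (τ j) = u ∧ S (τ (j+1)) = u - g then g else 0 := by
    intro j hjt
    have hj1 : τ j ≤ τ (j+1) := (hstep j).1
    have hm1 : min (τ j) t = τ j := min_eq_left (hj1.trans hjt)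
    have hm2 : min (τ (j+1)) t = τ (j+1) := min_eq_left hjt
    simp only [hf_def, hm1, hm2]
    rcases eq_or_ne (S (τ (j+1))) u with hd | hd
    · have hr : (if S (τ j) = u ∧ S (τ (j+1)) = u - g then g else (0:ℝ)) = 0 :=
        if_neg (by rintro ⟨-, h2⟩; rw [hd] at h2; linarith)
      rw [hr]
      by_cases hmem : u ∈ hook (S (τ j)) (S (τ (j+1)))
      · rw [if_pos hmem, hd, sub_self, abs_zero]
      · rw [if_neg hmem]
    · rcases eq_or_ne (S (τ j)) u with hc | hc
      · -- step starts at u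
        rcases DLT.step_eq hS hne' hτ' j (hc ▸ hu) with h | h
      -- hc ▸ hu : need S (τ j) ∈ grid; hu : u ∈ grid
        · -- up step: u ∉ hook
          have hnm : u ∉ hook (S (τ j)) (S (τ (j+1))) := by
            rw [DLT.hook_eq, h, hc]
            intro hmem
            have hmm : min u (u + g) = u := min_eq_left (by linarith)
            rw [hmm] at hmem
            exact lt_irrefl u hmem.1
          rw [if_neg hnm, if_neg (by rintro ⟨-, h2⟩; rw [h, hc] at h2; linarith)]
        · -- down step: contributes g
          have hm : u ∈ hook (S (τ j)) (S (τ (j+1))) := by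
            rw [DLT.hook_eq, h, hc]
            have hmin : min u (u - g) = u - g := min_eq_right (by linarith)
            have hmax : max u (u - g) = u := max_eq_left (by linarith)
            rw [hmin, hmax]
            exact ⟨by linarith, le_refl u⟩
          rw [if_pos hm, if_pos ⟨hc, by rw [h, hc]⟩, h, hc,
            show u - g - u = -g by ring, abs_neg, abs_of_pos hgpos]
      · -- step does not start at u : u not in hook
        have hnm : u ∉ hook (S (τ j)) (S (τ (j+1))) := by
          rw [DLT.hook_eq]
          intro hmem
          -- u strictly between S (τ j) and S (τ (j+1))
          have hub : u ∈ Set.uIcc (S (τ j)) (S (τ (j+1))) := ⟨hmem.1.le, hmem.2⟩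
          obtain ⟨w, hw, hSw⟩ := intermediate_value_uIcc hS.continuousOn hub
          rw [Set.uIcc_of_le hj1] at hw
          have hwlt : w < τ (j+1) := by
            rcases hw.2.lt_or_eq with h | h
            · exact h
            · exact absurd (h ▸ hSw) hd
          have h2 := DLT.notMem_between hτ' j hw.1 hwlt (by rw [hSw]; exact hu)
          rw [hSw] at h2
          exact hc h2.symm
        rw [if_neg hnm, if_neg (by rintro ⟨h1, -⟩; exact hc h1)]
  -- bound for the boundary term
  have key2 : ∀ j, τ j ≤ t → t < τ (j+1) → 0 ≤ f j ∧ f j ≤ g := by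
    intro j hjt hjt2
    have hm1 : min (τ j) t = τ j := min_eq_left hjt
    have hm2 : min (τ (j+1)) t = t := min_eq_right hjt2.le
    simp only [hf_def, hm1, hm2]
    split
    case isFalse => exact ⟨le_refl 0, hgpos.le⟩
    case isTrue hmem =>
      refine ⟨abs_nonneg _, ?_⟩
      rcases eq_or_ne u (S t) with hut | hut
      · rw [← hut, sub_self, abs_zero]; exact hgpos.le
      rcases eq_or_ne u (S (τ j)) with huc | huc
      · -- u = S (τ j) ∈ grid : use confinement
        have hg' : S (τ j) ∈ dyadicGrid n := huc ▸ hu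
        have hcf := DLT.confin hS hτ' j hg' hjt hjt2
        rw [huc]
        exact hcf.le
      · -- u strictly between : impossible
        exfalso
        rw [DLT.hook_eq] at hmem
        have hub : u ∈ Set.uIcc (S (τ j)) (S t) := ⟨hmem.1.le, hmem.2⟩
        obtain ⟨w, hw, hSw⟩ := intermediate_value_uIcc hS.continuousOn hub
        rw [Set.uIcc_of_le hjt] at hw
        have hwlt : w < τ (j+1) := lt_of_le_of_lt hw.2 hjt2
        have h2 := DLT.notMem_between hτ' j hw.1 hwlt (by rw [hSw]; exact hu)
        rw [hSw] at h2
        exact huc h2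
  -- the boundary index
  obtain ⟨js, hjs1, hjs2⟩ := DLT.exists_between_mono (τ := τ) (by rw [hτ0]; exact ht0) hNt
  have hjsN : js < N := by
    by_contra hcon
    exact absurd (le_trans (mono (le_of_not_gt hcon)) hjs1) (not_le.mpr hNt)
  -- the finset of completed downcrossing steps
  set J : Finset ℕ := (Finset.range N).filter
      (fun j => τ (j+1) ≤ t ∧ S (τ j) = u ∧ S (τ (j+1)) = u - g) with hJ_def
  have hjsJ : js ∉ J := by
    simp only [hJ_def, Finset.mem_filter]
    rintro ⟨-, h1, -⟩
    exact absurd h1 (not_le.mpr hjs2)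
  have hsub : insert js J ⊆ Finset.range N := by
    intro x hx
    rcases Finset.mem_insert.mp hx with h | h
    · exact Finset.mem_range.mpr (h ▸ hjsN)
    · exact (Finset.mem_filter.mp h).1
  have hsum1 : ∑ j ∈ Finset.range N, f j = ∑ j ∈ insert js J, f j := by
    refine (Finset.sum_subset hsub ?_).symm
    intro x hx hxn
    rcases lt_trichotomy t (τ x) with h | h | h
    · exact hzero x h
    · -- τ x = t : boundary-type, x = js unless ... handle via cases on τ (x+1) ≤ t
      rcases le_or_gt (τ (x+1)) t with h2 | h2
      · rw [key1 x h2, if_neg]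
        intro hcond
        exact hxn (Finset.mem_insert_of_mem (Finset.mem_filter.mpr ⟨hx, h2, hcond⟩))
      · -- x satisfies boundary property: x = js
        exfalso
        have hxjs : x = js := by
          rcases lt_trichotomy x js with hlt | heq | hgt
          · have : τ (x+1) ≤ τ js := mono hlt
            linarith
          · exact heq
          · have : τ (js+1) ≤ τ x := mono hgt
            linarith [h.le]
        subst hxjs
        exact hxn (Finset.mem_insert_self x J)
    · rcases le_or_gt (τ (x+1)) t with h2 | h2
      · rw [key1 x h2, if_neg]
        intro hcond
        exact hxn (Finset.mem_insert_of_mem (Finset.mem_filter.mpr ⟨hx, h2, hcond⟩))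
      · exfalso
        have hxjs : x = js := by
          rcases lt_trichotomy x js with hlt | heq | hgt
          · have : τ (x+1) ≤ τ js := mono hlt
            linarith
          · exact heq
          · have : τ (js+1) ≤ τ x := mono hgt
            linarith
        subst hxjs
        exact hxn (Finset.mem_insert_self x J)
  have hsum2 : ∑ j ∈ insert js J, f j = f js + J.card * g := by
    rw [Finset.sum_insert hjsJ]
    congr 1
    rw [Finset.sum_congr rfl (fun j hj => ?_), Finset.sum_const, nsmul_eq_mul]
    obtain ⟨hj1, hj2⟩ := Finset.mem_filter.mp hj
    rw [key1 j hj2.1, if_pos hj2.2]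
  -- the bijection with downcrossing pairs
  set Phi : ℕ → ℝ × ℝ := fun j =>
    (sSup (Set.Icc (τ j) (τ (j+1)) ∩ {w | S w = u}), τ (j+1)) with hPhi_def
  have hPhiMem : ∀ j ∈ J, ∀ (K : Set ℝ), K = Set.Icc (τ j) (τ (j+1)) ∩ {w | S w = u} →
      sSup K ∈ K ∧ (∀ w, sSup K < w → w < τ (j+1) → S w ∈ Set.Ioo (u - g) u) := by
    intro j hj K hK
    subst hK
    obtain ⟨hjN, hjt, hSc, hSd⟩ := Finset.mem_filter.mp hj
    obtain ⟨hj1, -, -⟩ := hstep j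
    have hKcomp : IsCompact (Set.Icc (τ j) (τ (j+1)) ∩ {w | S w = u}) :=
      isCompact_Icc.inter_right ((isClosed_singleton (x := u)).preimage hS)
    have hKne : (Set.Icc (τ j) (τ (j+1)) ∩ {w | S w = u}).Nonempty :=
      ⟨τ j, ⟨⟨le_refl _, hj1⟩, hSc⟩⟩
    have hKmem := hKcomp.sSup_mem hKne
    refine ⟨hKmem, ?_⟩
    obtain ⟨⟨hK1, hK2⟩, hK3⟩ := hKmem
    have hK3' : S (sSup (Set.Icc (τ j) (τ (j+1)) ∩ {w | S w = u})) = u := hK3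
    intro w hw1 hw2
    have hwub : ∀ x ∈ (Set.Icc (τ j) (τ (j+1)) ∩ {w | S w = u}), x ≤ sSup (Set.Icc (τ j) (τ (j+1)) ∩ {w | S w = u}) :=
      fun x hx => le_csSup hKcomp.bddAbove hx
    have hSwu : S w ≠ u := by
      intro h
      have hwK : w ∈ (Set.Icc (τ j) (τ (j+1)) ∩ {w | S w = u}) := ⟨⟨hK1.trans hw1.le, hw2.le⟩, h⟩
      linarith [hwub w hwK]
    constructor
    · -- u - g < S w
      by_contra hcon
      push_neg at hcon
      have hmem : u - g ∈ Set.Icc (S w) (S (sSup (Set.Icc (τ j) (τ (j+1)) ∩ {w | S w = u}))) := ⟨hcon, by rw [hK3']; linarith⟩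
      obtain ⟨w', hw', hSw'⟩ := intermediate_value_Icc' hw1.le hS.continuousOn hmem
      have hw'1 : τ j ≤ w' := hK1.trans hw'.1
      have hw'2 : w' < τ (j+1) := lt_of_le_of_lt hw'.2 hw2
      have := DLT.notMem_between hτ' j hw'1 hw'2 (hSw' ▸ hua)
      rw [hSw', hSc] at this
      linarith
    · -- S w < u
      rcases lt_or_ge (S w) u with h | h
      · exact h
      exfalso
      have h' : u < S w := lt_of_le_of_ne h (Ne.symm hSwu)
      have hmem : u ∈ Set.Icc (S (τ (j+1))) (S w) := ⟨by rw [hSd]; linarith, h⟩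
      obtain ⟨w', hw', hSw'⟩ := intermediate_value_Icc' hw2.le hS.continuousOn hmem
      have hwK : w' ∈ (Set.Icc (τ j) (τ (j+1)) ∩ {w | S w = u}) :=
        ⟨⟨hK1.trans (hw1.le.trans hw'.1), hw'.2⟩, hSw'⟩
      linarith [hwub w' hwK, hw'.1]
  have hforward : ∀ j ∈ J, Phi j ∈ downcrossingPairs S t (u - g) u := by
    intro j hj
    obtain ⟨hjN, hjt, hSc, hSd⟩ := Finset.mem_filter.mp hj
    obtain ⟨hj1, -, -⟩ := hstep j
    obtain ⟨hKmem, hint⟩ := hPhiMem j hj _ rfl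
    set σ := sSup (Set.Icc (τ j) (τ (j+1)) ∩ {w | S w = u}) with hσ
    obtain ⟨⟨hσ1, hσ2⟩, hσ3⟩ := hKmem
    have hσlt : σ < τ (j+1) := by
      rcases hσ2.lt_or_eq with h | h
      · exact h
      · exfalso; rw [h] at hσ3; rw [hσ3] at hSd; linarith
    refine ⟨⟨(htau0 j).trans hσ1, hσ2.trans hjt⟩, ⟨(htau0 (j+1)), hjt⟩, hσlt, hσ3, hSd, ?_⟩
    intro w hw
    exact hint w hw.1 hw.2
  have hinj : Set.InjOn Phi ↑J := by
    intro x hx y hy hxy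
    have : τ (x+1) = τ (y+1) := congrArg Prod.snd hxy
    exact Nat.succ_injective (smono.injective this)
  have hsurj : downcrossingPairs S t (u - g) u ⊆ Phi '' ↑J := by
    rintro ⟨p1, p2⟩ ⟨hp1, hp2, hplt, hSp1, hSp2, hpint⟩
    simp only at hSp1 hSp2 hplt hpint
    have hp2pos : 0 < p2 := lt_of_le_of_lt hp1.1 hplt
    obtain ⟨N2, hN2⟩ := DLT.tau_unbounded hS hne' hτ' p2
    obtain ⟨j, hjlt, hjge⟩ := DLT.exists_between_mono' (τ := τ) (by rw [hτ0]; exact hp2pos) hN2.le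
    -- τ j ≤ p1
    have hq : τ j ≤ p1 := by
      by_contra hcon
      push_neg at hcon
      have hj0 : j ≠ 0 := by
        intro h; rw [h, hτ0] at hcon; linarith [hp1.1]
      obtain ⟨m, rfl⟩ := Nat.exists_eq_succ_of_ne_zero hj0
      have hgrid : S (τ (m+1)) ∈ dyadicGrid n := (hstep m).2.1
      have hIoo : S (τ (m+1)) ∈ Set.Ioo (u - g) u := hpint _ ⟨hcon, hjlt⟩
      have := DLT.grid_step_down hu hgrid hIoo.2 hIoo.1.le
      linarith [hIoo.1]
    -- S (τ j) ≠ u - g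
    have hSne : S (τ j) ≠ u - g := by
      intro heq
      have hp1lt : p1 < τ (j+1) := lt_of_lt_of_le hplt hjge
      have := DLT.notMem_between hτ' j hq hp1lt (hSp1 ▸ hu)
      rw [hSp1, heq] at this
      linarith
    -- p2 = τ (j+1)
    have hp2A : p2 ∈ DLT.hitSet S n τ j := ⟨hjlt.le, hSp2 ▸ hua, by rw [hSp2]; exact fun h => hSne h.symm⟩
    have hp2τ : τ (j+1) = p2 :=
      le_antisymm ((hτ' j) ▸ csInf_le ⟨τ j, fun x hx => hx.1⟩ hp2A) hjge
    -- S (τ j) = u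
    have hSτj : S (τ j) = u := by
      rcases hq.lt_or_eq with h | h
      · have hp1lt : p1 < τ (j+1) := hp2τ.symm ▸ hplt
        have := DLT.notMem_between hτ' j h.le hp1lt (hSp1 ▸ hu)
        rw [hSp1] at this
        exact this.symm
      · rw [← h] at hSp1; exact hSp1
    have hjN : j < N := by
      have h1 : τ (j+1) < τ N := by
        rw [hp2τ]; exact lt_of_le_of_lt hp2.2 hNt
      have := smono.lt_iff_lt.mp h1
      omega
    have hjJ : j ∈ J := Finset.mem_filter.mpr ⟨Finset.mem_range.mpr hjN,
      by rw [hp2τ]; exact hp2.2, hSτj, by rw [hp2τ, hSp2]⟩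
    refine ⟨j, Finset.mem_coe.mpr hjJ, ?_⟩
    obtain ⟨hKmem, -⟩ := hPhiMem j hjJ _ rfl
    set σ := sSup (Set.Icc (τ j) (τ (j+1)) ∩ {w | S w = u}) with hσ
    obtain ⟨⟨hσ1, hσ2⟩, hσ3⟩ := hKmem
    have hp1K : p1 ∈ Set.Icc (τ j) (τ (j+1)) ∩ {w | S w = u} :=
      ⟨⟨hq, (hp2τ.symm ▸ hplt).le⟩, hSp1⟩
    have hbddK : BddAbove (Set.Icc (τ j) (τ (j+1)) ∩ {w | S w = u}) :=
      ⟨τ (j+1), fun x hx => hx.1.2⟩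
    have hle1 : p1 ≤ σ := le_csSup hbddK hp1K
    have hle2 : σ ≤ p1 := by
      by_contra hcon
      push_neg at hcon
      have hσp2 : σ < p2 := by
        rcases (hp2τ ▸ hσ2).lt_or_eq with h | h
        · exact h
        · exfalso; rw [h] at hσ3; rw [hσ3] at hSp2; linarith
      have := hpint σ ⟨hcon, hσp2⟩
      rw [hσ3] at this
      exact lt_irrefl u this.2
    have hfst : σ = p1 := le_antisymm hle2 hle1
    rw [Prod.ext_iff]
    exact ⟨hfst, hp2τ⟩
  have himg : Phi '' ↑J ⊆ downcrossingPairs S t (u - g) u := by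
    rintro p ⟨j, hj, rfl⟩
    exact hforward j hj
  have hcard : (downcrossingPairs S t (u - g) u).ncard = J.card := by
    rw [(Set.Subset.antisymm himg hsurj).symm, Set.ncard_image_of_injOn hinj, Set.ncard_coe_finset]
  obtain ⟨hb1, hb2⟩ := key2 js hjs1 hjs2
  refine ⟨f js, ⟨hb1, hb2⟩, ?_⟩
  rw [hDLT, hsum1, hsum2, hcard]
  ring
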